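/- In the read-priority approximate system, the mean number of write requests equals E[W̄] = λ_w/(μ_0 − λ_w) + Σ_{i=1}^{n} λ_w/(β_{n−i} − λ_w), and this can be rewritten in closed form as E[W̄] = (n+1)ν/(n+1 − ρ_r(1+ν)) + (n+1)ν·(ψ(Δ_n + n) − ψ(Δ_n))/(n+1 − ρ_r), where ν = ρ_w/(1-ρ_w), Δ_n = 1 − ρ_r ν/(n+1−ρ_r), and ψ is the digamma function. -/

import Mathlib

/-- The digamma function, the logarithmic derivative of the Gamma function. -/
noncomputable def digamma (x : ℝ) : ℝ := deriv (fun y : ℝ => Real.log (Real.Gamma y)) x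

/-- In the read-priority approximate system, the mean number of write requests
`E[W̄] = λ_w/(μ_0 − λ_w) + ∑_{i=1}^n λ_w/(β_{n−i} − λ_w)` has the closed form
`(n+1)ν/(n+1 − ρ_r(1+ν)) + (n+1)ν(ψ(Δ_n+n) − ψ(Δ_n))/(n+1 − ρ_r)` where
`ν = ρ_w/(1−ρ_w)` and `Δ_n = 1 − ρ_r ν/(n+1−ρ_r)`. -/

lemma gammaDiff {x : ℝ} (hx : 0 < x) : HasDerivAt Real.Gamma (deriv Real.Gamma x) x :=
  (Real.differentiableAt_Gamma (fun m => (((neg_nonpos.mpr (Nat.cast_nonneg m)).trans_lt hx)).ne')).hasDerivAt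

lemma digamma_eq {x : ℝ} (hx : 0 < x) :
    digamma x = deriv Real.Gamma x / Real.Gamma x :=
  ((gammaDiff hx).log (Real.Gamma_pos_of_pos hx).ne').deriv

lemma digamma_add_one {x : ℝ} (hx : 0 < x) : digamma (x + 1) = digamma x + 1 / x := by
  have hx1 : (0:ℝ) < x + 1 := by linarith
  have hGx := gammaDiff hx
  have hGx1 := gammaDiff hx1
  have hcomp : HasDerivAt (fun y : ℝ => Real.Gamma (y + 1)) (deriv Real.Gamma (x+1)) x := by
    have h := hGx1.comp x ((hasDerivAt_id x).add_const 1)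
    rw [mul_one] at h
    exact h
  have hmul : HasDerivAt (fun y : ℝ => y * Real.Gamma y)
      (1 * Real.Gamma x + x * deriv Real.Gamma x) x := (hasDerivAt_id x).mul hGx
  have heq : (fun y : ℝ => Real.Gamma (y + 1)) =ᶠ[nhds x] fun y => y * Real.Gamma y := by
    filter_upwards [eventually_gt_nhds hx] with y hy
    exact Real.Gamma_add_one hy.ne'
  have hcomp' : HasDerivAt (fun y : ℝ => Real.Gamma (y + 1))
      (1 * Real.Gamma x + x * deriv Real.Gamma x) x := hmul.congr_of_eventuallyEq heq
  have hd : deriv Real.Gamma (x+1) = Real.Gamma x + x * deriv Real.Gamma x := by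
    have := hcomp.unique hcomp'; linarith [this]
  have hGpos := Real.Gamma_pos_of_pos hx
  rw [digamma_eq hx1, digamma_eq hx, hd, Real.Gamma_add_one hx.ne']
  field_simp
  ring

lemma digamma_sub (D : ℝ) (hD : 0 < D) (n : ℕ) :
    digamma (D + n) - digamma D = ∑ k ∈ Finset.range n, 1 / (D + k) := by
  induction n with
  | zero => simp
  | succ m ih =>
    have hDm : 0 < D + m := by positivity
    rw [Finset.sum_range_succ, ← ih]
    have h : digamma (D + (m+1:ℕ)) = digamma (D + m) + 1/(D+m) := by
      have := digamma_add_one hDm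
      push_cast
      rw [show D + ((m:ℝ)+1) = (D + m) + 1 by ring, this]
    rw [h]; ring

theorem stmt_10 (lw mw rr : ℝ) (n : ℕ) (hn : 0 < n)
    (hlw : 0 < lw) (hmw : 0 < mw) (hrw : lw / mw < 1) (hrr : 0 ≤ rr)
    (nu : ℝ) (hnu : nu = (lw / mw) / (1 - lw / mw))
    (hstab : rr * (1 + nu) < (n : ℝ) + 1) (hstab' : rr < (n : ℝ) + 1)
    (mu0 : ℝ) (hmu0 : mu0 = mw * (1 - rr / ((n : ℝ) + 1)))
    (beta : ℕ → ℝ)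
    (hbeta : ∀ i : ℕ, beta i
      = (((n : ℝ) - i) * mw - ((n : ℝ) - i - 1) * lw) * (1 - rr / ((n : ℝ) + 1)))
    (Delta : ℝ) (hDelta : Delta = 1 - rr * nu / ((n : ℝ) + 1 - rr)) :
    lw / (mu0 - lw) + ∑ i ∈ Finset.Icc 1 n, lw / (beta (n - i) - lw)
      = ((n : ℝ) + 1) * nu / ((n : ℝ) + 1 - rr * (1 + nu))
        + ((n : ℝ) + 1) * nu * (digamma (Delta + n) - digamma Delta)
          / ((n : ℝ) + 1 - rr) := by
  have hmw' : mw ≠ 0 := hmw.ne'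
  have hρpos : 0 < lw / mw := div_pos hlw hmw
  have h1ρ : 0 < 1 - lw / mw := by linarith
  have hnupos : 0 < nu := by rw [hnu]; positivity
  have hn1 : (0:ℝ) < (n:ℝ) + 1 := by positivity
  have hn1rr : 0 < (n:ℝ) + 1 - rr := by linarith
  have hs : 0 < (n:ℝ) + 1 - rr * (1 + nu) := by linarith
  have hDpos : 0 < Delta := by
    rw [hDelta]
    have h2 : rr * nu / ((n:ℝ) + 1 - rr) < 1 := by
      rw [div_lt_one hn1rr]; nlinarith
    linarith
  -- first term
  have hfirst : lw / (mu0 - lw)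
      = ((n:ℝ) + 1) * nu / ((n:ℝ) + 1 - rr * (1 + nu)) := by
    have key : mu0 - lw = mw * (1 - lw/mw) * (((n:ℝ)+1 - rr*(1+nu)) / ((n:ℝ)+1)) := by
      have hml : mw - lw ≠ 0 := by
        have : lw < mw := by
          have := (div_lt_one hmw).mp hrw
          linarith
        linarith
      rw [hmu0, hnu]; field_simp; ring
    rw [key, hnu]
    field_simp
  -- the sum
  have hml : mw - lw ≠ 0 := by
    have : lw < mw := (div_lt_one hmw).mp hrw
    linarith
  rw [← Finset.Ico_add_one_right_eq_Icc, Finset.sum_Ico_eq_sum_range]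
  simp only [Nat.add_sub_cancel_left, Nat.succ_sub_one, Nat.add_sub_cancel]
  have hterm : ∀ k ∈ Finset.range n, lw / (beta (n - (1 + k)) - lw)
      = ((n:ℝ)+1) * nu / ((n:ℝ)+1-rr) * (1 / (Delta + k)) := by
    intro k hk
    have hk' : 1 + k ≤ n := by have := Finset.mem_range.mp hk; omega
    have hcast : ((n - (1 + k) : ℕ) : ℝ) = (n:ℝ) - 1 - k := by
      rw [Nat.cast_sub hk']; push_cast; ring
    have hDk : 0 < Delta + k := by positivity
    have hb : beta (n - (1 + k)) - lw
        = mw * (1 - lw/mw) * ((n:ℝ)+1-rr) * (Delta + k) / ((n:ℝ)+1) := by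
      rw [hbeta, hcast, hDelta, hnu]
      field_simp
      ring
    rw [hb, hnu]
    field_simp
  rw [Finset.sum_congr rfl hterm, ← Finset.mul_sum, ← digamma_sub Delta hDpos n, hfirst]
  ring
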